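/- Let G be an abelian topological group such that for each countable subgroup H of G, the subspace topology on H is finer than the Bohr topology of H. Then every countable subgroup of G is closed in G. -/

import Mathlib

/-- The Bohr topology of an abelian group. -/
noncomputable def bohrTopology (A : Type*) [AddCommGroup A] : TopologicalSpace A :=
  ⨅ φ : A →+ AddCircle (1 : ℝ), TopologicalSpace.induced φ inferInstance

/-- The natural injection `ℚ/ℤ → ℝ/ℤ`. -/
noncomputable def ratCircleToRealCircle : AddCircle (1 : ℚ) →+ AddCircle (1 : ℝ) :=
  QuotientAddGroup.map _ _ (AddMonoidHom.mk' (fun q : ℚ => (q : ℝ)) (by push_cast; simp))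
    (by
      intro q hq
      obtain ⟨n, hn⟩ := AddSubgroup.mem_zmultiples_iff.mp hq
      refine AddSubgroup.mem_zmultiples_iff.mpr ⟨n, ?_⟩
      simp only [zsmul_eq_mul, mul_one, AddMonoidHom.mk'_apply] at hn ⊢
      exact_mod_cast hn)

lemma ratCircleToRealCircle_eq_zero_iff (a : AddCircle (1 : ℚ)) :
    ratCircleToRealCircle a = 0 ↔ a = 0 := by
  constructor
  · induction a using QuotientAddGroup.induction_on with
    | H q =>
      intro hq
      rw [ratCircleToRealCircle, QuotientAddGroup.map_mk] at hq
      rw [QuotientAddGroup.eq_zero_iff] at hq ⊢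
      obtain ⟨n, hn⟩ := AddSubgroup.mem_zmultiples_iff.mp hq
      refine AddSubgroup.mem_zmultiples_iff.mpr ⟨n, ?_⟩
      simp only [zsmul_eq_mul, mul_one, AddMonoidHom.mk'_apply] at hn ⊢
      exact_mod_cast hn
  · rintro rfl; exact map_zero _

/-- Characters into `ℝ/ℤ` separate points. -/
lemma exists_real_character {A : Type*} [AddCommGroup A] {a : A} (ha : a ≠ 0) :
    ∃ φ : A →+ AddCircle (1 : ℝ), φ a ≠ 0 := by
  obtain ⟨c, hc⟩ := CharacterModule.exists_character_apply_ne_zero_of_ne_zero ha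
  refine ⟨ratCircleToRealCircle.comp c, fun h0 => hc ?_⟩
  exact (ratCircleToRealCircle_eq_zero_iff _).mp h0

/-- If the subspace topology on every countable subgroup of an abelian
topological group `G` is finer than its Bohr topology, then every countable
subgroup of `G` is closed in `G`. -/
theorem countable_subgroups_closed {G : Type*} [AddCommGroup G]
    [TopologicalSpace G] [IsTopologicalAddGroup G] [T2Space G]
    (h : ∀ H : AddSubgroup G, (H : Set G).Countable →
      (inferInstance : TopologicalSpace H) ≤ bohrTopology H) :
    ∀ H : AddSubgroup G, (H : Set G).Countable → IsClosed (H : Set G) := by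
  intro H hH
  refine isClosed_of_closure_subset fun x hx => ?_
  by_contra hxH
  -- the countable subgroup generated by `H` and `x`
  set K : AddSubgroup G := H ⊔ AddSubgroup.zmultiples x with hKdef
  have hKsub : (K : Set G) ⊆ Set.image2 (· + ·) (H : Set G)
      (AddSubgroup.zmultiples x : Set G) := by
    intro y hy
    obtain ⟨a, ha, b, hb, rfl⟩ := AddSubgroup.mem_sup.mp hy
    exact Set.mem_image2_of_mem ha hb
  have hzc : (AddSubgroup.zmultiples x : Set G).Countable := by
    have : (AddSubgroup.zmultiples x : Set G) = Set.range fun n : ℤ => n • x := by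
      ext y; simp [AddSubgroup.mem_zmultiples_iff, eq_comm]
    rw [this]; exact Set.countable_range _
  have hKc : (K : Set G).Countable := (Set.Countable.image2 hH hzc _).mono hKsub
  have hHK : H ≤ K := le_sup_left
  have hxK : x ∈ K := SetLike.le_def.mp le_sup_right (AddSubgroup.mem_zmultiples x)
  set x' : K := ⟨x, hxK⟩ with hx'def
  set H' : AddSubgroup K := H.addSubgroupOf K with hH'def
  -- a character of `K` killing `H` but not `x`
  have hmk : (QuotientAddGroup.mk x' : K ⧸ H') ≠ 0 := by
    rw [Ne, QuotientAddGroup.eq_zero_iff, hH'def, AddSubgroup.mem_addSubgroupOf]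
    exact hxH
  obtain ⟨φ, hφ⟩ := exists_real_character hmk
  set ψ : K →+ AddCircle (1 : ℝ) := φ.comp (QuotientAddGroup.mk' H') with hψdef
  have hψc : Continuous ψ :=
    continuous_iff_le_induced.mpr ((h K hKc).trans (iInf_le _ ψ))
  have hS : IsClosed (ψ ⁻¹' {0}) := (isClosed_singleton).preimage hψc
  have hsub : (Subtype.val ⁻¹' (H : Set G) : Set K) ⊆ ψ ⁻¹' {0} := by
    intro y hy
    have : (QuotientAddGroup.mk y : K ⧸ H') = 0 := by
      rw [QuotientAddGroup.eq_zero_iff, hH'def, AddSubgroup.mem_addSubgroupOf]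
      exact hy
    simp only [hψdef, AddMonoidHom.comp_apply, QuotientAddGroup.mk'_apply,
      Set.mem_preimage, Set.mem_singleton_iff, this, map_zero]
  have hx' : x' ∈ closure (Subtype.val ⁻¹' (H : Set G) : Set K) := by
    rw [closure_subtype]
    have himg : (Subtype.val '' (Subtype.val ⁻¹' (H : Set G) : Set K)) = (H : Set G) := by
      rw [Set.image_preimage_eq_inter_range, Subtype.range_coe]
      exact Set.inter_eq_left.mpr hHK
    rw [himg]
    exact hx
  have : ψ x' = 0 := closure_minimal hsub hS hx'
  exact hφ this
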